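/- Let x1, x2 ∈ [0,1] with x1 ≤ x2, let ε̃ ≥ 0, and let ε ∈ ℝ be such that x1+ε ∈ [0,1], x2−ε ∈ [0,1], and |ε| ≤ ε̃. Then h_D(x1,x2) − h_C(x1,x2;ε̃) ≤ h_D(x1+ε, x2−ε). -/

import Mathlib

/-- Binary entropy function (base 2), with the convention `0 log 0 = 0`. -/
noncomputable def hb (x : ℝ) : ℝ := -(x * Real.logb 2 x) - (1 - x) * Real.logb 2 (1 - x)

/-- The function `h_D`. -/
noncomputable def hD (x1 x2 : ℝ) : ℝ := 2 * hb ((x1 + x2) / 2) - hb x1 - hb x2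

/-- The function `h_C(x1, x2; ε)`. -/
noncomputable def hC (x1 x2 ε : ℝ) : ℝ :=
  sSup ((fun ε' => hb (min x1 x2 + ε') - hb (min x1 x2) + hb (max x1 x2 - ε') - hb (max x1 x2))
    '' Set.Icc 0 (min ε ((max x1 x2 - min x1 x2) / 2)))

lemma hb_eq (x : ℝ) : hb x = (Real.log 2)⁻¹ * Real.binEntropy x := by
  unfold hb Real.binEntropy Real.logb
  rw [Real.log_inv, Real.log_inv]
  ring

lemma hb_continuous : Continuous hb := by
  have : hb = fun x => (Real.log 2)⁻¹ * Real.binEntropy x := funext hb_eq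
  rw [this]
  exact continuous_const.mul Real.binEntropy_continuous

lemma hb_concave : ConcaveOn ℝ (Set.Icc (0:ℝ) 1) hb := by
  have : hb = (Real.log 2)⁻¹ • Real.binEntropy := funext hb_eq
  rw [this]
  exact Real.strictConcave_binEntropy.concaveOn.smul
    (inv_nonneg.2 (Real.log_nonneg one_le_two))

/-- Spreading lemma: moving two points in [0,1] apart decreases the sum of `hb`. -/
lemma spread {a b a' b' : ℝ} (ha : a ∈ Set.Icc (0:ℝ) 1) (hbb : b ∈ Set.Icc (0:ℝ) 1)
    (ha' : a' ∈ Set.Icc (0:ℝ) 1) (hb' : b' ∈ Set.Icc (0:ℝ) 1)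
    (h1 : a ≤ a') (h2 : a' ≤ b') (h3 : b' ≤ b) (hsum : a + b = a' + b') :
    hb a + hb b ≤ hb a' + hb b' := by
  rcases eq_or_lt_of_le (h1.trans (h2.trans h3)) with h | h
  · have e1 : a = a' := le_antisymm h1 (by linarith)
    have e2 : b = b' := by linarith
    rw [e1, e2]
  · set l := (b - a') / (b - a) with hl
    set m := (a' - a) / (b - a) with hm
    have hba : 0 < b - a := by linarith
    have hl0 : 0 ≤ l := div_nonneg (by linarith) hba.le
    have hm0 : 0 ≤ m := div_nonneg (by linarith) hba.le
    have hlm : l + m = 1 := by rw [hl, hm]; field_simp; ring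
    have hb'eq : b' = a + b - a' := by linarith
    have e1 : l * a + m * b = a' := by
      rw [hl, hm]; field_simp; ring
    have e2 : m * a + l * b = b' := by
      rw [hl, hm, hb'eq]; field_simp; ring
    have c1 := hb_concave.2 ha hbb hl0 hm0 hlm
    have c2 := hb_concave.2 ha hbb hm0 hl0 (by linarith : m + l = 1)
    rw [smul_eq_mul, smul_eq_mul, smul_eq_mul, smul_eq_mul] at c1 c2
    rw [e1] at c1
    rw [e2] at c2
    calc hb a + hb b = (l + m) * (hb a + hb b) := by rw [hlm]; ring
      _ = (l * hb a + m * hb b) + (m * hb a + l * hb b) := by ring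
      _ ≤ hb a' + hb b' := add_le_add c1 c2

theorem hD_sub_hC_le (x1 x2 εt ε : ℝ) (hx1 : x1 ∈ Set.Icc (0:ℝ) 1)
    (hx2 : x2 ∈ Set.Icc (0:ℝ) 1) (hx12 : x1 ≤ x2) (hεt : 0 ≤ εt)
    (h1 : x1 + ε ∈ Set.Icc (0:ℝ) 1) (h2 : x2 - ε ∈ Set.Icc (0:ℝ) 1)
    (hε : |ε| ≤ εt) :
    hD x1 x2 - hC x1 x2 εt ≤ hD (x1 + ε) (x2 - ε) := by
  obtain ⟨hx10, hx11⟩ := hx1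
  obtain ⟨hx20, hx21⟩ := hx2
  obtain ⟨ha0, ha1⟩ := h1
  obtain ⟨hb0, hb1⟩ := h2
  set c : ℝ := (x2 - x1) / 2 with hc
  have hc0 : 0 ≤ c := by simp [hc]; linarith
  set ε' : ℝ := max 0 (min ε c) with hε'
  have hε'0 : 0 ≤ ε' := le_max_left _ _
  have hε'c : ε' ≤ c := max_le hc0 (min_le_right _ _)
  have hε't : ε' ≤ εt := by
    rcases le_total ε 0 with h | h
    · have : min ε c ≤ 0 := le_trans (min_le_left _ _) h
      simp [hε', max_eq_left this, hεt]
    · exact max_le hεt (le_trans (min_le_left _ _) ((le_abs_self ε).trans hε))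
  -- membership of ε' in the interval
  have hmin : min x1 x2 = x1 := min_eq_left hx12
  have hmax : max x1 x2 = x2 := max_eq_right hx12
  have hmem : ε' ∈ Set.Icc 0 (min εt ((max x1 x2 - min x1 x2) / 2)) := by
    rw [hmin, hmax]
    exact ⟨hε'0, le_min hε't hε'c⟩
  -- key inequality via spreading
  have ha'mem : x1 + ε' ∈ Set.Icc (0:ℝ) 1 := by
    constructor
    · linarith
    · have : x1 + ε' ≤ x1 + c := by linarith
      have : x1 + c = (x1 + x2) / 2 := by rw [hc]; ring
      nlinarith [hε'c]
  have hb'mem : x2 - ε' ∈ Set.Icc (0:ℝ) 1 := by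
    constructor
    · nlinarith [hε'c]
    · linarith
  have hmid : x1 + ε' ≤ x2 - ε' := by nlinarith [hε'c]
  have key : hb (x1 + ε) + hb (x2 - ε) ≤ hb (x1 + ε') + hb (x2 - ε') := by
    rcases le_total ε 0 with hneg | hpos
    · -- ε' could be anything ≥ 0 but min ε c = ε ≤ 0 so ε' = 0
      have : ε' = 0 := by
        have : min ε c ≤ 0 := le_trans (min_le_left _ _) hneg
        simp [hε', max_eq_left this]
      rw [this]
      exact spread ⟨ha0, ha1⟩ ⟨hb0, hb1⟩ (by simpa using ⟨hx10, hx11⟩)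
        (by simpa using ⟨hx20, hx21⟩) (by linarith) (by simpa using hx12) (by linarith)
        (by ring)
    · rcases le_total ε c with hle | hgt
      · have : ε' = ε := by
          rw [hε', min_eq_left hle, max_eq_right hpos]
        rw [this]
      · have hee : ε' = c := by
          rw [hε', min_eq_right hgt, max_eq_right hc0]
        rw [hee]
        have hac : x1 + c = x2 - c := by rw [hc]; ring
        rw [add_comm (hb (x1 + ε)) (hb (x2 - ε))]
        exact spread ⟨hb0, hb1⟩ ⟨ha0, ha1⟩ (by rw [hee] at ha'mem; exact ha'mem)
          (by rw [hee] at hb'mem; exact hb'mem) (by linarith) (by linarith) (by linarith)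
          (by ring)
  -- bound below the sSup
  have hbdd : BddAbove ((fun ε' => hb (min x1 x2 + ε') - hb (min x1 x2) + hb (max x1 x2 - ε')
      - hb (max x1 x2)) '' Set.Icc 0 (min εt ((max x1 x2 - min x1 x2) / 2))) := by
    apply (isCompact_Icc.image _).bddAbove
    exact ((hb_continuous.comp (continuous_const.add continuous_id)).sub continuous_const).add
      (hb_continuous.comp (continuous_const.sub continuous_id)) |>.sub continuous_const
  have hsup : hb (x1 + ε') - hb x1 + hb (x2 - ε') - hb x2 ≤ hC x1 x2 εt := by
    apply le_csSup hbdd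
    exact ⟨ε', hmem, by rw [hmin, hmax]⟩
  have hmid2 : (x1 + ε + (x2 - ε)) / 2 = (x1 + x2) / 2 := by ring
  unfold hD
  rw [hmid2]
  linarith [key, hsup]
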